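/- arXiv:2003.04011 — 5 statements merged into one kernel-verified Lean document; each statement's English description precedes it below -/
import Mathlib

section
/- Let G be a finite simple graph, X ⊆ V(G), let S ⊂ V(G) be a separator of G, and let F be an X-free S-fragment of G. Let G′ be the graph obtained from the induced subgraph G[F̄ ∪ S], where F̄ = V(G − S) \ F, by adding all possible edges between vertices of S (if not already present). Then κ_{G′}(X) ≥ κ_G(X). -/
open SimpleGraph

variable {V : Type*} {W : Type*}

/-- `S` is an `X`-separator of `G`: at least two components of `G - S`
contain a vertex of `X`. -/
def SepSet (G : SimpleGraph V) (X S : Set V) : Prop :=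
  ∃ (x y : V) (hx : x ∈ X ∧ x ∉ S) (hy : y ∈ X ∧ y ∉ S),
    ¬ (G.induce Sᶜ).Reachable ⟨x, hx.2⟩ ⟨y, hy.2⟩

/-- `κ_G(X)`: the largest `k ≤ |X| - 1` such that every `X`-separator of `G`
has at least `k` vertices. -/
noncomputable def graphKappa (G : SimpleGraph V) (X : Set V) : ℕ :=
  sSup {k : ℕ | k ≤ X.ncard - 1 ∧ ∀ S : Set V, SepSet G X S → k ≤ S.ncard}

/-- `F` is an `S`-fragment of `G`: a union of the vertex sets of at least one
but not all components of `G - S`. -/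
def IsFragment (G : SimpleGraph V) (S F : Set V) : Prop :=
  F.Nonempty ∧ Disjoint F S ∧ (Sᶜ \ F).Nonempty ∧
    ∀ a ∈ F, ∀ b, G.Adj a b → b ∉ S → b ∈ F

/-- `B` is an `S`-`X`-fragment of `G`: an `S`-fragment such that both `B` and
its complementary fragment `Sᶜ \ B` contain a vertex of `X`. -/
def IsXFragment (G : SimpleGraph V) (X S B : Set V) : Prop :=
  IsFragment G S B ∧ (B ∩ X).Nonempty ∧ ((Sᶜ \ B) ∩ X).Nonempty

/-- Key walk-transfer lemma: any walk in `G - S'` whose endpoints avoid `F`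
gives reachability in `G' - S'`; if the start is in `F`, we instead get a
vertex of `S` (outside `S'`) from which the end is reachable in `G' - S'`. -/
lemma walk_transfer {V : Type*} (G G' : SimpleGraph V) (S F : Set V)
    (hdisj : Disjoint F S)
    (hclose : ∀ a ∈ F, ∀ b, G.Adj a b → b ∉ S → b ∈ F)
    (hG' : ∀ a b : V, G'.Adj a b ↔
      (a ≠ b ∧ a ∉ F ∧ b ∉ F ∧ (G.Adj a b ∨ (a ∈ S ∧ b ∈ S))))
    (S' : Set V) {u v : ↥(S'ᶜ)} (w : (G.induce S'ᶜ).Walk u v)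
    (hv : (v : V) ∉ F) :
    ((u : V) ∉ F → (G'.induce S'ᶜ).Reachable u v) ∧
      ((u : V) ∈ F → ∃ c : ↥(S'ᶜ), (c : V) ∈ S ∧ (G'.induce S'ᶜ).Reachable c v) := by
  induction w with
  | nil =>
      refine ⟨fun _ => Reachable.refl _, fun hu => absurd hu hv⟩
  | @cons a b c h w ih =>
      have hab : G.Adj (a : V) (b : V) := h
      constructor
      · intro ha
        by_cases hb : (b : V) ∈ F
        · -- a is adjacent to a vertex of F but not in F, so a ∈ S
          have haS : (a : V) ∈ S := by
            by_contra haS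
            exact ha (hclose _ hb _ hab.symm haS)
          obtain ⟨cc, hccS, hreach⟩ := (ih hv).2 hb
          by_cases hac : (a : V) = (cc : V)
          · have : a = cc := Subtype.ext hac
            exact this ▸ hreach
          · have hadj : (G'.induce S'ᶜ).Adj a cc := by
              show G'.Adj (a : V) (cc : V)
              rw [hG']
              exact ⟨hac, ha, fun hcF => hdisj.le_bot ⟨hcF, hccS⟩,
                Or.inr ⟨haS, hccS⟩⟩
            exact hadj.reachable.trans hreach
        · have hadj : (G'.induce S'ᶜ).Adj a b := by
            show G'.Adj (a : V) (b : V)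
            rw [hG']
            exact ⟨fun hv' => hab.ne hv', ha, hb, Or.inl hab⟩
          exact hadj.reachable.trans ((ih hv).1 hb)
      · intro ha
        by_cases hb : (b : V) ∈ F
        · exact (ih hv).2 hb
        · have hbS : (b : V) ∈ S := by
            by_contra hbS
            exact hb (hclose _ ha _ hab hbS)
          exact ⟨b, hbS, (ih hv).1 hb⟩

/-- Lemma: let `G` be a finite simple graph, `X ⊆ V(G)`, `S` a separator of
`G` and `F` an `X`-free `S`-fragment of `G`.  If `G'` is obtained from the
induced subgraph `G[F̄ ∪ S]` by adding all edges between vertices of `S`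
(here realized on the ambient vertex type, the vertices of `F` becoming
isolated), then `κ_{G'}(X) ≥ κ_G(X)`. -/
theorem kappa_fragment_complete {V : Type*} [Fintype V] (G : SimpleGraph V)
    (X : Set V) (S F : Set V) (hS : SepSet G Set.univ S)
    (hF : IsFragment G S F) (hfree : Disjoint F X)
    (G' : SimpleGraph V)
    (hG' : ∀ a b : V, G'.Adj a b ↔
      (a ≠ b ∧ a ∉ F ∧ b ∉ F ∧ (G.Adj a b ∨ (a ∈ S ∧ b ∈ S)))) :
    graphKappa G X ≤ graphKappa G' X := by
  obtain ⟨-, hdisj, -, hclose⟩ := hF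
  apply csSup_le_csSup
  · exact ⟨X.ncard - 1, fun k hk => hk.1⟩
  · exact ⟨0, Nat.zero_le _, fun _ _ => Nat.zero_le _⟩
  · rintro k ⟨hk1, hk2⟩
    refine ⟨hk1, fun S' hsep => hk2 S' ?_⟩
    obtain ⟨x, y, hx, hy, hnr⟩ := hsep
    refine ⟨x, y, hx, hy, fun hr => hnr ?_⟩
    obtain ⟨w⟩ := hr
    have hxF : x ∉ F := fun hxF => hfree.le_bot ⟨hxF, hx.1⟩
    have hyF : y ∉ F := fun hyF => hfree.le_bot ⟨hyF, hy.1⟩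
    exact (walk_transfer G G' S F hdisj hclose hG' S' w hyF).1 hxF
end

section
/- Let G be a finite simple graph, X ⊆ V(G), and let vy be an X-legal edge of G. Then κ_{G/vy}(X) ≥ κ_G(X) − 1; moreover, κ_{G/vy}(X) = κ_G(X) − 1 holds if and only if there exists an X-separator of G of size κ_G(X) containing both v and y. -/
open SimpleGraph

variable {V : Type*} {W : Type*}

/-- `G/vy`: the graph obtained from `G` by contracting the edge `vy` into `v`,
i.e. `y` is removed (it becomes an isolated vertex of the ambient type) and an
edge `vz` is added for every `z` with `yz ∈ E(G)` and `vz ∉ E(G)`. -/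
def contractEdge (G : SimpleGraph V) (v y : V) : SimpleGraph V where
  Adj a b := a ≠ y ∧ b ≠ y ∧ a ≠ b ∧
    (G.Adj a b ∨ (a = v ∧ G.Adj y b) ∨ (b = v ∧ G.Adj a y))
  symm := by
    constructor
    rintro a b ⟨ha, hb, hab, h⟩
    refine ⟨hb, ha, hab.symm, ?_⟩
    rcases h with h | ⟨rfl, h⟩ | ⟨rfl, h⟩
    · exact Or.inl h.symm
    · exact Or.inr (Or.inr ⟨rfl, h.symm⟩)
    · exact Or.inr (Or.inl ⟨rfl, h.symm⟩)
  loopless := by constructor; rintro a ⟨_, _, h, _⟩; exact h rfl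

lemma reach_map {G H : SimpleGraph V} {T U : Set V} (f : V → V)
    (hf : ∀ a ∈ T, f a ∈ U)
    (hadjmap : ∀ a b : V, a ∈ T → b ∈ T → G.Adj a b → H.Adj (f a) (f b) ∨ f a = f b) :
    ∀ {u w : T}, (G.induce T).Walk u w →
      (H.induce U).Reachable ⟨f u, hf u u.2⟩ ⟨f w, hf w w.2⟩ := by
  intro u w p
  induction p with
  | nil => exact Reachable.refl _
  | @cons a b c h p ih =>
    rcases hadjmap a b a.2 b.2 h with h' | h'
    · exact (Adj.reachable (show (H.induce U).Adj ⟨f a, hf a a.2⟩ ⟨f b, hf b b.2⟩ from h')).trans ih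
    · have he : (⟨f a.1, hf a a.2⟩ : U) = ⟨f b.1, hf b b.2⟩ := Subtype.ext h'
      rw [he]; exact ih

lemma reach_map' {G H : SimpleGraph V} {T U : Set V} (f : V → V)
    {u w : V} {hu : u ∈ T} {hw : w ∈ T}
    (h : (G.induce T).Reachable ⟨u, hu⟩ ⟨w, hw⟩)
    (hf : ∀ a ∈ T, f a ∈ U)
    (hadjmap : ∀ a b : V, a ∈ T → b ∈ T → G.Adj a b → H.Adj (f a) (f b) ∨ f a = f b)
    {hu' : u ∈ U} {hw' : w ∈ U} (hfu : f u = u) (hfw : f w = w) :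
    (H.induce U).Reachable ⟨u, hu'⟩ ⟨w, hw'⟩ := by
  obtain ⟨p⟩ := h
  have h2 := reach_map f hf hadjmap p
  have e1 : (⟨f u, hf u hu⟩ : U) = ⟨u, hu'⟩ := Subtype.ext hfu
  have e2 : (⟨f w, hf w hw⟩ : U) = ⟨w, hw'⟩ := Subtype.ext hfw
  rwa [e1, e2] at h2

variable {G : SimpleGraph V} {X : Set V} {v y : V}

lemma sep_of_contract_sep_not_mem (hadj : G.Adj v y) (hy : y ∉ X) {S : Set V}
    (hS : SepSet (contractEdge G v y) X S) (hv : v ∉ S) (hyS : y ∉ S) :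
    SepSet G X S := by
  classical
  obtain ⟨x1, x2, hx1, hx2, hnr⟩ := hS
  have hx1y : x1 ≠ y := fun h => hy (h ▸ hx1.1)
  have hx2y : x2 ≠ y := fun h => hy (h ▸ hx2.1)
  refine ⟨x1, x2, hx1, hx2, fun hr => hnr ?_⟩
  refine reach_map' (U := Sᶜ) (fun z => if z = y then v else z) hr ?_ ?_
    (if_neg hx1y) (if_neg hx2y)
  · intro a ha
    by_cases h : a = y <;> simp [h, hv, ha]
  · intro a b ha hb hab
    by_cases h1 : a = y
    · have hby : b ≠ y := fun h => hab.ne' (h.trans h1.symm)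
      rw [if_pos h1, if_neg hby]
      by_cases h2 : b = v
      · exact Or.inr h2.symm
      · exact Or.inl ⟨hadj.ne, hby, Ne.symm h2,
          Or.inr (Or.inl ⟨rfl, by rw [h1] at hab; exact hab⟩)⟩
    · by_cases h2 : b = y
      · rw [if_neg h1, if_pos h2]
        by_cases h3 : a = v
        · exact Or.inr h3
        · exact Or.inl ⟨h1, hadj.ne, h3,
            Or.inr (Or.inr ⟨rfl, by rw [h2] at hab; exact hab⟩)⟩
      · rw [if_neg h1, if_neg h2]
        exact Or.inl ⟨h1, h2, hab.ne, Or.inl hab⟩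

lemma sep_union_of_contract_sep (hy : y ∉ X) {S : Set V}
    (hS : SepSet (contractEdge G v y) X S) (hv : v ∈ S) (hyS : y ∉ S) :
    SepSet G X (S ∪ {y}) := by
  obtain ⟨x1, x2, hx1, hx2, hnr⟩ := hS
  have hx1y : x1 ≠ y := fun h => hy (h ▸ hx1.1)
  have hx2y : x2 ≠ y := fun h => hy (h ▸ hx2.1)
  have hm1 : x1 ∈ (S ∪ {y})ᶜ := by simp [hx1.2, hx1y]
  have hm2 : x2 ∈ (S ∪ {y})ᶜ := by simp [hx2.2, hx2y]
  refine ⟨x1, x2, ⟨hx1.1, hm1⟩, ⟨hx2.1, hm2⟩, fun hr => hnr ?_⟩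
  refine reach_map' (U := Sᶜ) (fun z => z) hr (fun a ha h => ha (Or.inl h))
    (fun a b ha hb hab => ?_) rfl rfl
  exact Or.inl ⟨fun h => ha (Or.inr h), fun h => hb (Or.inr h), hab.ne, Or.inl hab⟩

lemma contract_sep_diff (hy : y ∉ X) {S : Set V}
    (hS : SepSet (contractEdge G v y) X S) :
    SepSet (contractEdge G v y) X (S \ {y}) := by
  classical
  obtain ⟨x1, x2, hx1, hx2, hnr⟩ := hS
  have hx1y : x1 ≠ y := fun h => hy (h ▸ hx1.1)
  have hx2y : x2 ≠ y := fun h => hy (h ▸ hx2.1)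
  have hm1 : x1 ∈ (S \ {y})ᶜ := fun h => hx1.2 h.1
  have hm2 : x2 ∈ (S \ {y})ᶜ := fun h => hx2.2 h.1
  refine ⟨x1, x2, ⟨hx1.1, hm1⟩, ⟨hx2.1, hm2⟩, fun hr => hnr ?_⟩
  refine reach_map' (U := Sᶜ) (fun z => if z = y then x1 else z) hr ?_ ?_
    (if_neg hx1y) (if_neg hx2y)
  · intro a ha
    by_cases h : a = y
    · simpa [h] using hx1.2
    · simp only [if_neg h]
      exact fun hmem => ha ⟨hmem, h⟩
  · intro a b ha hb hab
    rw [if_neg hab.1, if_neg hab.2.1]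
    exact Or.inl hab

lemma contract_sep_of_sep (hy : y ∉ X) {S : Set V}
    (hS : SepSet G X S) (hv : v ∈ S) (hyS : y ∈ S) :
    SepSet (contractEdge G v y) X (S \ {y}) := by
  classical
  obtain ⟨x1, x2, hx1, hx2, hnr⟩ := hS
  have hx1y : x1 ≠ y := fun h => hy (h ▸ hx1.1)
  have hx2y : x2 ≠ y := fun h => hy (h ▸ hx2.1)
  have hm1 : x1 ∈ (S \ {y})ᶜ := fun h => hx1.2 h.1
  have hm2 : x2 ∈ (S \ {y})ᶜ := fun h => hx2.2 h.1
  refine ⟨x1, x2, ⟨hx1.1, hm1⟩, ⟨hx2.1, hm2⟩, fun hr => hnr ?_⟩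
  refine reach_map' (U := Sᶜ) (fun z => if z = y then x1 else z) hr ?_ ?_
    (if_neg hx1y) (if_neg hx2y)
  · intro a ha
    by_cases h : a = y
    · simpa [h] using hx1.2
    · simp only [if_neg h]
      exact fun hmem => ha ⟨hmem, h⟩
  · intro a b ha hb hab
    rw [if_neg hab.1, if_neg hab.2.1]
    have hav : a ≠ v := fun h => ha ⟨h ▸ hv, hab.1⟩
    have hbv : b ≠ v := fun h => hb ⟨h ▸ hv, hab.2.1⟩
    rcases hab.2.2.2 with h | ⟨h, _⟩ | ⟨h, _⟩
    · exact Or.inl h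
    · exact absurd h hav
    · exact absurd h hbv

variable [Fintype V]

lemma kappa_mem (G : SimpleGraph V) (X : Set V) :
    graphKappa G X ≤ X.ncard - 1 ∧
      ∀ S : Set V, SepSet G X S → graphKappa G X ≤ S.ncard := by
  have h : graphKappa G X ∈
      {k : ℕ | k ≤ X.ncard - 1 ∧ ∀ S : Set V, SepSet G X S → k ≤ S.ncard} := by
    apply Nat.sSup_mem
    · exact ⟨0, by simp⟩
    · exact ⟨X.ncard - 1, fun k hk => hk.1⟩
  exact h

lemma le_kappa {G : SimpleGraph V} {X : Set V} {k : ℕ} (h1 : k ≤ X.ncard - 1)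
    (h2 : ∀ S : Set V, SepSet G X S → k ≤ S.ncard) : k ≤ graphKappa G X :=
  le_csSup ⟨X.ncard - 1, fun _ hj => hj.1⟩ ⟨h1, h2⟩

lemma kappa_le_card_succ (hadj : G.Adj v y) (hy : y ∉ X) {S : Set V}
    (hS : SepSet (contractEdge G v y) X S) (hyS : y ∉ S) :
    graphKappa G X ≤ S.ncard + 1 := by
  by_cases hv : v ∈ S
  · have h := (kappa_mem G X).2 _ (sep_union_of_contract_sep hy hS hv hyS)
    rwa [Set.union_singleton, Set.ncard_insert_of_notMem hyS S.toFinite] at h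
  · have h := (kappa_mem G X).2 _ (sep_of_contract_sep_not_mem hadj hy hS hv hyS)
    omega



/-- Claim: for an `X`-legal edge `vy` of a finite simple graph `G`,
`κ_{G/vy}(X) ≥ κ_G(X) - 1`, and `κ_{G/vy}(X) = κ_G(X) - 1` holds if and only
if `G` has an `X`-separator of size `κ_G(X)` containing both `v` and `y`. -/
theorem kappa_contract {V : Type*} [Fintype V] (G : SimpleGraph V)
    (X : Set V) (v y : V) (hadj : G.Adj v y) (hy : y ∉ X) :
    (graphKappa G X : ℤ) - 1 ≤ (graphKappa (contractEdge G v y) X : ℤ) ∧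
    ((graphKappa (contractEdge G v y) X : ℤ) = (graphKappa G X : ℤ) - 1 ↔
      ∃ S : Set V, SepSet G X S ∧ S.ncard = graphKappa G X ∧ v ∈ S ∧ y ∈ S) := by
  set κ := graphKappa G X with hκ
  set κ' := graphKappa (contractEdge G v y) X with hκ'
  have key : ∀ S : Set V, SepSet (contractEdge G v y) X S → κ - 1 ≤ S.ncard := by
    intro S hS
    have hS' := contract_sep_diff hy hS
    have hyS' : y ∉ S \ {y} := fun h => h.2 rfl
    have h1 := kappa_le_card_succ hadj hy hS' hyS'
    have h2 : (S \ {y}).ncard ≤ S.ncard := Set.ncard_le_ncard Set.diff_subset S.toFinite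
    omega
  have hge : κ - 1 ≤ κ' := le_kappa (by have := (kappa_mem G X).1; omega) key
  refine ⟨by omega, ?_, ?_⟩
  · intro heq
    have hκ1 : 1 ≤ κ := by omega
    by_contra hno
    push_neg at hno
    have big : ∀ S : Set V, SepSet (contractEdge G v y) X S → κ ≤ S.ncard := by
      intro S hS
      by_cases hyS : y ∈ S
      · have hS' := contract_sep_diff hy hS
        have hyS' : y ∉ S \ {y} := fun h => h.2 rfl
        have h1 := kappa_le_card_succ hadj hy hS' hyS'
        have h2 : (S \ {y}).ncard + 1 = S.ncard :=
          Set.ncard_diff_singleton_add_one hyS S.toFinite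
        omega
      · by_cases hv : v ∈ S
        · have hsep := sep_union_of_contract_sep hy hS hv hyS
          have hcard : (S ∪ {y}).ncard = S.ncard + 1 := by
            rw [Set.union_singleton, Set.ncard_insert_of_notMem hyS S.toFinite]
          have h1 := (kappa_mem G X).2 _ hsep
          rw [hcard] at h1
          rcases Nat.lt_or_ge S.ncard κ with hlt | hge2
          · exact absurd (Or.inr rfl : y ∈ S ∪ {y})
              (hno _ hsep (by omega) (Or.inl hv))
          · exact hge2
        · exact (kappa_mem G X).2 _ (sep_of_contract_sep_not_mem hadj hy hS hv hyS)
    have : κ ≤ κ' := le_kappa (by have := (kappa_mem G X).1; omega) big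
    omega
  · rintro ⟨S, hS, hcard, hv, hyS⟩
    have hκ1 : 1 ≤ κ := by
      have h0 : 0 < S.ncard := (Set.ncard_pos S.toFinite).mpr ⟨v, hv⟩
      omega
    have hsep' := contract_sep_of_sep hy hS hv hyS
    have hub : κ' ≤ (S \ {y}).ncard := (kappa_mem (contractEdge G v y) X).2 _ hsep'
    have hcard' : (S \ {y}).ncard + 1 = S.ncard :=
      Set.ncard_diff_singleton_add_one hyS S.toFinite
    omega
end

section
/- Let S and S′ be separators of a finite simple graph G, let F be an S-fragment and F′ an S′-fragment, and set T(F,F′) := (F ∩ S′) ∪ (S′ ∩ S) ∪ (S ∩ F′). Then: (i) if F ∩ F′ ≠ ∅, then T(F,F′) is a separator of G separating F ∩ F′ from the remaining graph; (ii) |T(F,F′)| + |T(F̄,F̄′)| = |S| + |S′|, where F̄ = V(G − S) \ F and F̄′ = V(G − S′) \ F′. -/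
open SimpleGraph

variable {V : Type*} {W : Type*}

lemma frag_reach_subset (G : SimpleGraph V) {S B : Set V}
    (hB : IsFragment G S B) :
    ∀ {u v : ↥(Sᶜ)}, (G.induce Sᶜ).Reachable u v → (u : V) ∈ B → (v : V) ∈ B := by
  intro u v h hu
  obtain ⟨w⟩ := h
  induction w with
  | nil => exact hu
  | @cons a b c h p ih => exact ih (hB.2.2.2 _ hu _ h b.2)

lemma three_ncard {V : Type*} [Fintype V] (A B C : Set V)
    (h1 : Disjoint A B) (h2 : Disjoint (A ∪ B) C) :
    ((A ∪ B) ∪ C).ncard = A.ncard + B.ncard + C.ncard := by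
  rw [Set.ncard_union_eq h2 (Set.toFinite _) (Set.toFinite _),
      Set.ncard_union_eq h1 (Set.toFinite _) (Set.toFinite _)]

/-- Claim: let `S, S'` be separators of a finite simple graph `G`, `F` an
`S`-fragment and `F'` an `S'`-fragment, and
`T(F,F') = (F ∩ S') ∪ (S' ∩ S) ∪ (S ∩ F')`.  Then
(i) if `F ∩ F' ≠ ∅`, then `T(F,F')` is a separator of `G` separating `F ∩ F'`
from the remaining graph (i.e. `F ∩ F'` is a `T(F,F')`-fragment), and
(ii) `|T(F,F')| + |T(F̄,F̄')| = |S| + |S'|`. -/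
theorem fragment_T_claim {V : Type*} [Fintype V] (G : SimpleGraph V)
    (S S' F F' : Set V)
    (hS : SepSet G Set.univ S) (hS' : SepSet G Set.univ S')
    (hF : IsFragment G S F) (hF' : IsFragment G S' F') :
    ((F ∩ F').Nonempty →
      SepSet G Set.univ ((F ∩ S') ∪ (S' ∩ S) ∪ (S ∩ F')) ∧
      IsFragment G ((F ∩ S') ∪ (S' ∩ S) ∪ (S ∩ F')) (F ∩ F')) ∧
    ((F ∩ S') ∪ (S' ∩ S) ∪ (S ∩ F')).ncard
        + (((Sᶜ \ F) ∩ S') ∪ (S' ∩ S) ∪ (S ∩ (S'ᶜ \ F'))).ncard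
      = S.ncard + S'.ncard := by
  have hFS : ∀ x ∈ F, x ∉ S := fun x hx => Set.disjoint_left.mp hF.2.1 hx
  have hF'S' : ∀ x ∈ F', x ∉ S' := fun x hx => Set.disjoint_left.mp hF'.2.1 hx
  set T : Set V := (F ∩ S') ∪ (S' ∩ S) ∪ (S ∩ F') with hT
  constructor
  · intro hne
    -- first show F ∩ F' is a T-fragment
    have hfrag : IsFragment G T (F ∩ F') := by
      refine ⟨hne, ?_, ?_, ?_⟩
      · rw [Set.disjoint_left]
        rintro x ⟨hxF, hxF'⟩ (⟨⟨_, hxS'⟩ | ⟨hxS', _⟩⟩ | ⟨hxS, _⟩)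
        · exact hF'S' x hxF' hxS'
        · exact hF'S' x hxF' hxS'
        · exact hFS x hxF hxS
      · obtain ⟨y, hySc, hyF⟩ := hF.2.2.1
        refine ⟨y, ?_, fun h => hyF h.1⟩
        rintro (⟨⟨hyF', _⟩ | ⟨_, hyS⟩⟩ | ⟨hyS, _⟩)
        · exact hyF hyF'
        · exact hySc hyS
        · exact hySc hyS
      · rintro a ⟨haF, haF'⟩ b hab hbT
        have hbS : b ∉ S := by
          intro hbS
          by_cases hbS' : b ∈ S'
          · exact hbT (Or.inl (Or.inr ⟨hbS', hbS⟩))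
          · exact hbT (Or.inr ⟨hbS, hF'.2.2.2 a haF' b hab hbS'⟩)
        have hbF : b ∈ F := hF.2.2.2 a haF b hab hbS
        have hbS' : b ∉ S' := fun hbS' => hbT (Or.inl (Or.inl ⟨hbF, hbS'⟩))
        exact ⟨hbF, hF'.2.2.2 a haF' b hab hbS'⟩
    refine ⟨?_, hfrag⟩
    obtain ⟨x, hx⟩ := hne
    obtain ⟨y, hySc, hyF⟩ := hF.2.2.1
    have hxT : x ∉ T := Set.disjoint_left.mp hfrag.2.1 hx
    have hyT : y ∉ T := by
      rintro (⟨⟨hyF', _⟩ | ⟨_, hyS⟩⟩ | ⟨hyS, _⟩)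
      · exact hyF hyF'
      · exact hySc hyS
      · exact hySc hyS
    refine ⟨x, y, ⟨trivial, hxT⟩, ⟨trivial, hyT⟩, fun hreach => ?_⟩
    have := frag_reach_subset G hfrag hreach hx
    exact hyF this.1
  · -- cardinality part
    have hd1 : Disjoint (F ∩ S') (S' ∩ S) :=
      Set.disjoint_left.mpr (fun x ⟨hxF, _⟩ ⟨_, hxS⟩ => hFS x hxF hxS)
    have hd2 : Disjoint ((F ∩ S') ∪ (S' ∩ S)) (S ∩ F') := by
      rw [Set.disjoint_left]
      rintro x (⟨hxF, _⟩ | ⟨hxS', _⟩) ⟨hxS, hxF'⟩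
      · exact hFS x hxF hxS
      · exact hF'S' x hxF' hxS'
    have hd3 : Disjoint ((Sᶜ \ F) ∩ S') (S' ∩ S) :=
      Set.disjoint_left.mpr (fun x ⟨⟨hxSc, _⟩, _⟩ ⟨_, hxS⟩ => hxSc hxS)
    have hd4 : Disjoint (((Sᶜ \ F) ∩ S') ∪ (S' ∩ S)) (S ∩ (S'ᶜ \ F')) := by
      rw [Set.disjoint_left]
      rintro x (⟨⟨hxSc, _⟩, _⟩ | ⟨hxS', _⟩) ⟨hxS, hxS'c, _⟩
      · exact hxSc hxS
      · exact hxS'c hxS'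
    rw [three_ncard _ _ _ hd1 hd2, three_ncard _ _ _ hd3 hd4]
    have hS'eq : S' = ((F ∩ S') ∪ (S' ∩ S)) ∪ ((Sᶜ \ F) ∩ S') := by
      ext x
      simp only [Set.mem_union, Set.mem_inter_iff, Set.mem_diff, Set.mem_compl_iff]
      tauto
    have hSeq : S = ((S ∩ F') ∪ (S' ∩ S)) ∪ (S ∩ (S'ᶜ \ F')) := by
      ext x
      simp only [Set.mem_union, Set.mem_inter_iff, Set.mem_diff, Set.mem_compl_iff]
      tauto
    have hd5 : Disjoint ((F ∩ S') ∪ (S' ∩ S)) ((Sᶜ \ F) ∩ S') := by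
      rw [Set.disjoint_left]
      rintro x (⟨hxF, _⟩ | ⟨_, hxS⟩) ⟨⟨hxSc, hxFc⟩, _⟩
      · exact hxFc hxF
      · exact hxSc hxS
    have hd6 : Disjoint (S ∩ F') (S' ∩ S) := by
      rw [Set.disjoint_left]
      rintro x ⟨_, hxF'⟩ ⟨hxS', _⟩
      exact hF'S' x hxF' hxS'
    have hd7 : Disjoint ((S ∩ F') ∪ (S' ∩ S)) (S ∩ (S'ᶜ \ F')) := by
      rw [Set.disjoint_left]
      rintro x (⟨_, hxF'⟩ | ⟨hxS', _⟩) ⟨_, hxS'c, hxF'c⟩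
      · exact hxF'c hxF'
      · exact hxS'c hxS'
    have hc1 : S'.ncard = (F ∩ S').ncard + (S' ∩ S).ncard + ((Sᶜ \ F) ∩ S').ncard := by
      conv_lhs => rw [hS'eq]
      exact three_ncard _ _ _ hd1 hd5
    have hc2 : S.ncard = (S ∩ F').ncard + (S' ∩ S).ncard + (S ∩ (S'ᶜ \ F')).ncard := by
      conv_lhs => rw [hSeq]
      exact three_ncard _ _ _ hd6 hd7
    omega
end

section
/- Let G be a finite simple connected graph and X ⊆ V(G) with κ_G(X) = 4 and κ_G(V(G)) = 3, and suppose that κ_{G/vy}(X) < 4 for every X-legal edge vy of G. If T is a separator of G with |T| = 3 and F is an X-free T-fragment of G, then |F| = 1. -/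
open SimpleGraph

variable {V : Type*} {W : Type*}

namespace XFS

lemma not_reach_of_closed {G : SimpleGraph V} {S Q : Set V}
    (hcl : ∀ a ∈ Q, ∀ b, G.Adj a b → b ∉ S → b ∈ Q)
    {p q : V} (hp : p ∈ Q) (hq : q ∉ Q) (hpS : p ∉ S) (hqS : q ∉ S) :
    ¬ (G.induce Sᶜ).Reachable ⟨p, hpS⟩ ⟨q, hqS⟩ := by
  intro h
  obtain ⟨w⟩ := h
  suffices H : ∀ (u v : ↥Sᶜ) (_ : (G.induce Sᶜ).Walk u v), (u : V) ∈ Q → (v : V) ∈ Q by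
    exact hq (H _ _ w hp)
  intro u v w
  induction w with
  | nil => exact id
  | @cons a b c h pth ih => exact fun hu => ih (hcl _ hu _ h b.2)

lemma sepSet_of_closed {G : SimpleGraph V} {Y S Q : Set V}
    (hcl : ∀ a ∈ Q, ∀ b, G.Adj a b → b ∉ S → b ∈ Q)
    {p q : V} (hpY : p ∈ Y) (hp : p ∈ Q) (hpS : p ∉ S)
    (hqY : q ∈ Y) (hq : q ∉ Q) (hqS : q ∉ S) : SepSet G Y S :=
  ⟨p, q, ⟨hpY, hpS⟩, ⟨hqY, hqS⟩, not_reach_of_closed hcl hp hq hpS hqS⟩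

lemma kappa_le_spec [Fintype V] {G : SimpleGraph V} {Y : Set V} {n : ℕ}
    (h : graphKappa G Y = n) :
    n ≤ Y.ncard - 1 ∧ ∀ S : Set V, SepSet G Y S → n ≤ S.ncard := by
  have hne : {k : ℕ | k ≤ Y.ncard - 1 ∧ ∀ S : Set V, SepSet G Y S → k ≤ S.ncard}.Nonempty :=
    ⟨0, Nat.zero_le _, fun S _ => Nat.zero_le _⟩
  have hbdd : BddAbove {k : ℕ | k ≤ Y.ncard - 1 ∧ ∀ S : Set V, SepSet G Y S → k ≤ S.ncard} :=
    ⟨Y.ncard - 1, fun k hk => hk.1⟩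
  have hmem := Nat.sSup_mem hne hbdd
  rw [graphKappa] at h
  rw [h] at hmem
  exact hmem

lemma kappa_lt_spec [Fintype V] {G : SimpleGraph V} {Y : Set V}
    (h : graphKappa G Y < 4) (h5 : 5 ≤ Y.ncard) :
    ∃ S : Set V, SepSet G Y S ∧ S.ncard ≤ 3 := by
  by_contra hno
  push_neg at hno
  have hmem : 4 ∈ {k : ℕ | k ≤ Y.ncard - 1 ∧ ∀ S : Set V, SepSet G Y S → k ≤ S.ncard} :=
    ⟨by omega, fun S hS => by have := hno S hS; omega⟩
  have hbdd : BddAbove {k : ℕ | k ≤ Y.ncard - 1 ∧ ∀ S : Set V, SepSet G Y S → k ≤ S.ncard} :=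
    ⟨Y.ncard - 1, fun k hk => hk.1⟩
  have h4 : 4 ≤ graphKappa G Y := le_csSup hbdd hmem
  omega

lemma reach_transfer {α β : Type*} {G₁ : SimpleGraph α} {G₂ : SimpleGraph β} (φ : α → β)
    (hφ : ∀ a b, G₁.Adj a b → G₂.Adj (φ a) (φ b) ∨ φ a = φ b) :
    ∀ {u v : α}, G₁.Reachable u v → G₂.Reachable (φ u) (φ v) := by
  intro u v h
  obtain ⟨w⟩ := h
  induction w with
  | nil => exact Reachable.refl _
  | @cons a b c h pth ih =>
    rcases hφ _ _ h with h' | h'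
    · exact (h'.reachable).trans ih
    · exact h' ▸ ih

lemma legal_edge_sep [Fintype V] {G : SimpleGraph V} {X : Set V}
    (hXsep : ∀ S : Set V, SepSet G X S → 4 ≤ S.ncard)
    (hX5 : 5 ≤ X.ncard)
    (hcontr : ∀ v y : V, G.Adj v y → y ∉ X → graphKappa (contractEdge G v y) X < 4)
    {v y : V} (hadj : G.Adj v y) (hy : y ∉ X) :
    ∃ Ws : Set V, SepSet G X Ws ∧ Ws.ncard = 4 ∧ v ∈ Ws ∧ y ∈ Ws := by
  classical
  obtain ⟨S, hS, hS3⟩ := kappa_lt_spec (hcontr v y hadj hy) hX5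
  obtain ⟨x₁, x₂, hx₁, hx₂, hnr⟩ := hS
  have hx₁y : x₁ ≠ y := fun h => hy (h ▸ hx₁.1)
  have hx₂y : x₂ ≠ y := fun h => hy (h ▸ hx₂.1)
  by_cases hvS : v ∈ S
  · have hsep : SepSet G X (S ∪ {y}) := by
      refine ⟨x₁, x₂, ⟨hx₁.1, ?_⟩, ⟨hx₂.1, ?_⟩, ?_⟩
      · rintro (h | h)
        · exact hx₁.2 h
        · exact hx₁y h
      · rintro (h | h)
        · exact hx₂.2 h
        · exact hx₂y h
      · intro hreach
        apply hnr
        have key := reach_transfer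
          (G₁ := G.induce (S ∪ {y})ᶜ) (G₂ := (contractEdge G v y).induce Sᶜ)
          (fun a => (⟨a.1, fun h => a.2 (Or.inl h)⟩ : ↥Sᶜ)) ?_ hreach
        · exact key
        · intro a b h
          left
          have hay : a.1 ≠ y := fun h' => a.2 (Or.inr h')
          have hby : b.1 ≠ y := fun h' => b.2 (Or.inr h')
          have h' : G.Adj a.1 b.1 := h
          exact ⟨hay, hby, h'.ne, Or.inl h'⟩
    refine ⟨S ∪ {y}, hsep, ?_, Or.inl hvS, Or.inr rfl⟩
    have h1 : (S ∪ {y}).ncard ≤ S.ncard + ({y} : Set V).ncard := Set.ncard_union_le _ _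
    have h2 : ({y} : Set V).ncard = 1 := Set.ncard_singleton y
    have h3 := hXsep _ hsep
    omega
  · exfalso
    have hsep : SepSet G X S := by
      refine ⟨x₁, x₂, hx₁, hx₂, ?_⟩
      intro hreach
      apply hnr
      have key := reach_transfer
        (G₁ := G.induce Sᶜ) (G₂ := (contractEdge G v y).induce Sᶜ)
        (fun a => if h : a.1 = y then (⟨v, hvS⟩ : ↥Sᶜ) else ⟨a.1, a.2⟩) ?_ hreach
      · dsimp only at key
        rw [dif_neg hx₁y, dif_neg hx₂y] at key
        exact key
      · intro a b h
        have h' : G.Adj a.1 b.1 := h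
        by_cases ha : a.1 = y
        · have hb : b.1 ≠ y := fun hb => h'.ne (ha.trans hb.symm)
          rw [dif_pos ha, dif_neg hb]
          by_cases hbv : b.1 = v
          · exact Or.inr (Subtype.ext hbv.symm)
          · exact Or.inl ⟨hadj.ne, hb, fun e => hbv e.symm,
              Or.inr (Or.inl ⟨rfl, ha ▸ h'⟩)⟩
        · by_cases hb : b.1 = y
          · rw [dif_pos hb, dif_neg ha]
            by_cases hav : a.1 = v
            · exact Or.inr (Subtype.ext hav)
            · exact Or.inl ⟨ha, hadj.ne, fun e => hav e,
                Or.inr (Or.inr ⟨rfl, hb ▸ h'⟩)⟩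
          · rw [dif_neg ha, dif_neg hb]
            exact Or.inl ⟨ha, hb, h'.ne, Or.inl h'⟩
    have := hXsep S hsep
    omega

lemma frag_edge {G : SimpleGraph V} {T F : Set V} (hconn : G.Connected)
    (hF : IsFragment G T F) : ∃ t ∈ T, ∃ c ∈ F, G.Adj t c := by
  obtain ⟨a, ha⟩ := hF.1
  obtain ⟨b, hb⟩ := hF.2.2.1
  obtain ⟨w⟩ := hconn.preconnected a b
  have H : ∀ (u v : V) (_ : G.Walk u v), u ∈ F → v ∉ F → ∃ t ∈ T, ∃ c ∈ F, G.Adj t c := by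
    intro u v w
    induction w with
    | nil => exact fun h h' => absurd h h'
    | @cons u u' v h pth ih =>
      intro hu hv
      by_cases h' : u' ∈ F
      · exact ih h' hv
      · have hT : u' ∈ T := by
          by_contra hT
          exact h' (hF.2.2.2 u hu u' h hT)
        exact ⟨u', hT, u, hu, h.symm⟩
  exact H a b w ha hb.2

lemma ncard3 [Fintype V] (P Q R : Set V)
    (h1 : ∀ a, a ∈ P → a ∈ Q → False) (h2 : ∀ a, a ∈ P → a ∈ R → False)
    (h3 : ∀ a, a ∈ Q → a ∈ R → False) :
    (P ∪ Q ∪ R).ncard = P.ncard + Q.ncard + R.ncard := by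
  have d1 : Disjoint P Q := Set.disjoint_left.mpr (fun {a} h hq => h1 a h hq)
  have d2 : Disjoint (P ∪ Q) R := Set.disjoint_left.mpr (by
    rintro a (h | h) hr
    · exact h2 a h hr
    · exact h3 a h hr)
  rw [Set.ncard_union_eq d2, Set.ncard_union_eq d1]



lemma uniform {V : Type*} [Fintype V] {G : SimpleGraph V} {X T F : Set V}
    (hXsep : ∀ S : Set V, SepSet G X S → 4 ≤ S.ncard)
    (hX5 : 5 ≤ X.ncard)
    (hcontr : ∀ v y : V, G.Adj v y → y ∉ X → graphKappa (contractEdge G v y) X < 4)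
    (hT3 : T.ncard = 3) (hF : IsFragment G T F) (hfree : Disjoint F X)
    {t c : V} (ht : t ∈ T) (hc : c ∈ F) (htc : G.Adj t c) :
    ∃ (Ws A B : Set V) (σA σB : V),
      (∀ a : V, a ∈ Ws ∨ a ∈ A ∨ a ∈ B) ∧
      (∀ a, a ∈ A → a ∉ Ws) ∧ (∀ a, a ∈ B → a ∉ Ws) ∧ (∀ a, a ∈ A → a ∉ B) ∧
      (∀ a ∈ A, ∀ b, G.Adj a b → b ∉ Ws → b ∈ A) ∧
      (∀ a ∈ B, ∀ b, G.Adj a b → b ∉ Ws → b ∈ B) ∧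
      Ws ∩ T = {t} ∧ Ws ∩ F = {c} ∧ A ∩ T = {σA} ∧ B ∩ T = {σB} ∧
      (∃ x, x ∈ X ∧ x ∈ A) ∧ (∃ x, x ∈ X ∧ x ∈ B) ∧
      (∀ w ∈ Ws, w ∉ X → (∃ a, a ∈ A ∧ G.Adj w a) ∧ (∃ b, b ∈ B ∧ G.Adj w b)) := by
  classical
  have hcX : c ∉ X := Set.disjoint_left.mp hfree hc
  obtain ⟨Ws, hWsep, hW4, htW, hcW⟩ := legal_edge_sep hXsep hX5 hcontr htc hcX
  obtain ⟨x₁, x₂, hx₁, hx₂, hnr⟩ := hWsep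
  set A : Set V := {a : V | ∃ h : a ∈ Wsᶜ, (G.induce Wsᶜ).Reachable ⟨x₁, hx₁.2⟩ ⟨a, h⟩}
    with hAdef
  set B : Set V := {a : V | a ∈ Wsᶜ ∧ a ∉ A} with hBdef
  have hAx : x₁ ∈ A := ⟨hx₁.2, Reachable.refl _⟩
  have hAW : ∀ a, a ∈ A → a ∉ Ws := by rintro a ⟨h, _⟩; exact h
  have hAcl : ∀ a ∈ A, ∀ b, G.Adj a b → b ∉ Ws → b ∈ A := by
    rintro a ⟨ha, hr⟩ b hadj hb
    exact ⟨hb, hr.trans (SimpleGraph.Adj.reachable (by exact hadj))⟩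
  have hx₂B : x₂ ∈ B := by
    refine ⟨hx₂.2, fun hA => ?_⟩
    obtain ⟨h, hr⟩ := hA
    exact hnr hr
  have hBW : ∀ a, a ∈ B → a ∉ Ws := fun a ha => ha.1
  have hAB : ∀ a, a ∈ A → a ∉ B := fun a ha hb => hb.2 ha
  have hBcl : ∀ a ∈ B, ∀ b, G.Adj a b → b ∉ Ws → b ∈ B :=
    fun a ha b hadj hb => ⟨hb, fun hbA => ha.2 (hAcl b hbA a hadj.symm ha.1)⟩
  have cover : ∀ a : V, a ∈ Ws ∨ a ∈ A ∨ a ∈ B := by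
    intro a
    by_cases h1 : a ∈ Ws
    · exact Or.inl h1
    · by_cases h2 : a ∈ A
      · exact Or.inr (Or.inl h2)
      · exact Or.inr (Or.inr ⟨h1, h2⟩)
  set Fp : Set V := Tᶜ ∩ Fᶜ with hFpdef
  have hFT : ∀ a, a ∈ F → a ∉ T := fun a ha => Set.disjoint_left.mp hF.2.1 ha
  have hFcl := hF.2.2.2
  have hFpcl : ∀ a ∈ Fp, ∀ b, G.Adj a b → b ∉ T → b ∈ Fp :=
    fun a ha b hadj hbT => ⟨hbT, fun hbF => ha.2 (hFcl b hbF a hadj.symm ha.1)⟩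
  have coverV : ∀ a : V, a ∈ T ∨ a ∈ F ∨ a ∈ Fp := by
    intro a
    by_cases h1 : a ∈ T
    · exact Or.inl h1
    · by_cases h2 : a ∈ F
      · exact Or.inr (Or.inl h2)
      · exact Or.inr (Or.inr ⟨h1, h2⟩)
  have eqT : (A∩T).ncard + (B∩T).ncard + (Ws∩T).ncard = 3 := by
    have hU : (A∩T) ∪ (B∩T) ∪ (Ws∩T) = T := by
      apply Set.Subset.antisymm
      · rintro a ((⟨_,h⟩|⟨_,h⟩)|⟨_,h⟩) <;> exact h
      · intro a haT
        rcases cover a with h|h|h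
        · exact Or.inr ⟨h, haT⟩
        · exact Or.inl (Or.inl ⟨h, haT⟩)
        · exact Or.inl (Or.inr ⟨h, haT⟩)
    rw [← ncard3 _ _ _ (fun a ha hb => hAB a ha.1 hb.1) (fun a ha hb => hAW a ha.1 hb.1)
      (fun a ha hb => hBW a ha.1 hb.1), hU, hT3]
  have eqW : (Ws∩T).ncard + (Ws∩F).ncard + (Ws∩Fp).ncard = 4 := by
    have hU : (Ws∩T) ∪ (Ws∩F) ∪ (Ws∩Fp) = Ws := by
      apply Set.Subset.antisymm
      · rintro a ((⟨h,_⟩|⟨h,_⟩)|⟨h,_⟩) <;> exact h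
      · intro a haW
        rcases coverV a with h|h|h
        · exact Or.inl (Or.inl ⟨haW, h⟩)
        · exact Or.inl (Or.inr ⟨haW, h⟩)
        · exact Or.inr ⟨haW, h⟩
    rw [← ncard3 _ _ _ (fun a ha hb => hFT a hb.2 ha.2) (fun a ha hb => hb.2.1 ha.2)
      (fun a ha hb => hb.2.2 ha.2), hU, hW4]
  have h1t : 0 < (Ws∩T).ncard := (Set.ncard_pos (Set.toFinite _)).mpr ⟨t, htW, ht⟩
  have h1f : 0 < (Ws∩F).ncard := (Set.ncard_pos (Set.toFinite _)).mpr ⟨c, hcW, hc⟩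
  have qA : (∃ x, x ∈ X ∧ x ∈ Fp ∧ x ∈ A) →
      4 ≤ (A∩T).ncard + (Ws∩T).ncard + (Ws∩Fp).ncard := by
    rintro ⟨xa, hxaX, hxaFp, hxaA⟩
    have hcl : ∀ a ∈ Fp ∩ A, ∀ b, G.Adj a b → b ∉ ((A∩T) ∪ (Ws∩T) ∪ (Ws∩Fp)) → b ∈ Fp ∩ A := by
      intro a ha b hadj hbS
      rcases cover b with hb | hb | hb
      · rcases coverV b with h2 | h2 | h2
        · exact absurd (Or.inl (Or.inr ⟨hb, h2⟩)) hbS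
        · exact absurd (hFcl b h2 a hadj.symm ha.1.1) ha.1.2
        · exact absurd (Or.inr ⟨hb, h2⟩) hbS
      · refine ⟨⟨?_, ?_⟩, hb⟩
        · intro h2
          exact hbS (Or.inl (Or.inl ⟨hb, h2⟩))
        · intro h2
          exact ha.1.2 (hFcl b h2 a hadj.symm ha.1.1)
      · exact absurd (hAcl a ha.2 b hadj (hBW b hb)) hb.2
    have hpS : xa ∉ (A∩T) ∪ (Ws∩T) ∪ (Ws∩Fp) := by
      rintro ((h|h)|h)
      · exact hxaFp.1 h.2
      · exact hAW xa hxaA h.1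
      · exact hAW xa hxaA h.1
    have hqQ : x₂ ∉ Fp ∩ A := fun h => hx₂B.2 h.2
    have hqS : x₂ ∉ (A∩T) ∪ (Ws∩T) ∪ (Ws∩Fp) := by
      rintro ((h|h)|h)
      · exact hx₂B.2 h.1
      · exact hBW x₂ hx₂B h.1
      · exact hBW x₂ hx₂B h.1
    have h4 := hXsep _ (sepSet_of_closed hcl hxaX ⟨hxaFp, hxaA⟩ hpS hx₂.1 hqQ hqS)
    rwa [ncard3 _ _ _ (fun a ha hb => hAW a ha.1 hb.1) (fun a ha hb => hAW a ha.1 hb.1)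
      (fun a ha hb => hb.2.1 ha.2)] at h4
  have qB : (∃ x, x ∈ X ∧ x ∈ Fp ∧ x ∈ B) →
      4 ≤ (B∩T).ncard + (Ws∩T).ncard + (Ws∩Fp).ncard := by
    rintro ⟨xa, hxaX, hxaFp, hxaB⟩
    have hcl : ∀ a ∈ Fp ∩ B, ∀ b, G.Adj a b → b ∉ ((B∩T) ∪ (Ws∩T) ∪ (Ws∩Fp)) → b ∈ Fp ∩ B := by
      intro a ha b hadj hbS
      rcases cover b with hb | hb | hb
      · rcases coverV b with h2 | h2 | h2
        · exact absurd (Or.inl (Or.inr ⟨hb, h2⟩)) hbS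
        · exact absurd (hFcl b h2 a hadj.symm ha.1.1) ha.1.2
        · exact absurd (Or.inr ⟨hb, h2⟩) hbS
      · exact absurd (hBcl a ha.2 b hadj (hAW b hb)).2 (fun h => h hb)
      · refine ⟨⟨?_, ?_⟩, hb⟩
        · intro h2
          exact hbS (Or.inl (Or.inl ⟨hb, h2⟩))
        · intro h2
          exact ha.1.2 (hFcl b h2 a hadj.symm ha.1.1)
    have hpS : xa ∉ (B∩T) ∪ (Ws∩T) ∪ (Ws∩Fp) := by
      rintro ((h|h)|h)
      · exact hxaFp.1 h.2
      · exact hBW xa hxaB h.1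
      · exact hBW xa hxaB h.1
    have hqQ : x₁ ∉ Fp ∩ B := fun h => hAB x₁ hAx h.2
    have hqS : x₁ ∉ (B∩T) ∪ (Ws∩T) ∪ (Ws∩Fp) := by
      rintro ((h|h)|h)
      · exact hAB x₁ hAx h.1
      · exact hAW x₁ hAx h.1
      · exact hAW x₁ hAx h.1
    have h4 := hXsep _ (sepSet_of_closed hcl hxaX ⟨hxaFp, hxaB⟩ hpS hx₁.1 hqQ hqS)
    rwa [ncard3 _ _ _ (fun a ha hb => hBW a ha.1 hb.1) (fun a ha hb => hBW a ha.1 hb.1)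
      (fun a ha hb => hb.2.1 ha.2)] at h4
  have hXAT : (¬ ∃ x, x ∈ X ∧ x ∈ Fp ∧ x ∈ A) → 0 < (A∩T).ncard := by
    intro hno
    rcases coverV x₁ with h|h|h
    · exact (Set.ncard_pos (Set.toFinite _)).mpr ⟨x₁, hAx, h⟩
    · exact absurd hx₁.1 (Set.disjoint_left.mp hfree h)
    · exact absurd ⟨x₁, hx₁.1, h, hAx⟩ hno
  have hXBT : (¬ ∃ x, x ∈ X ∧ x ∈ Fp ∧ x ∈ B) → 0 < (B∩T).ncard := by
    intro hno
    rcases coverV x₂ with h|h|h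
    · exact (Set.ncard_pos (Set.toFinite _)).mpr ⟨x₂, hx₂B, h⟩
    · exact absurd hx₂.1 (Set.disjoint_left.mp hfree h)
    · exact absurd ⟨x₂, hx₂.1, h, hx₂B⟩ hno
  have key : (Ws∩T).ncard = 1 ∧ (Ws∩F).ncard = 1 ∧ (A∩T).ncard = 1 ∧ (B∩T).ncard = 1 := by
    by_cases hqa' : ∃ x, x ∈ X ∧ x ∈ Fp ∧ x ∈ A
    · by_cases hqb' : ∃ x, x ∈ X ∧ x ∈ Fp ∧ x ∈ B
      · have i1 := qA hqa'
        have i2 := qB hqb'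
        omega
      · have i1 := qA hqa'
        have i2 := hXBT hqb'
        omega
    · by_cases hqb' : ∃ x, x ∈ X ∧ x ∈ Fp ∧ x ∈ B
      · have i1 := qB hqb'
        have i2 := hXAT hqa'
        omega
      · have i1 := hXAT hqa'
        have i2 := hXBT hqb'
        have hXFp : 2 ≤ (X ∩ Fp).ncard := by
          have hsub : X ⊆ (X∩T) ∪ (X∩Fp) := by
            intro a haX
            rcases coverV a with h|h|h
            · exact Or.inl ⟨haX, h⟩
            · exact absurd haX (Set.disjoint_left.mp hfree h)
            · exact Or.inr ⟨haX, h⟩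
          have hA1 : X.ncard ≤ ((X∩T) ∪ (X∩Fp)).ncard := Set.ncard_le_ncard hsub
          have hA2 : ((X∩T) ∪ (X∩Fp)).ncard ≤ (X∩T).ncard + (X∩Fp).ncard :=
            Set.ncard_union_le _ _
          have hA3 : (X∩T).ncard ≤ T.ncard := Set.ncard_le_ncard Set.inter_subset_right
          omega
        have hsub2 : X ∩ Fp ⊆ Ws ∩ Fp := by
          rintro a ⟨haX, haFp⟩
          rcases cover a with h|h|h
          · exact ⟨h, haFp⟩
          · exact absurd ⟨a, haX, haFp, h⟩ hqa'
          · exact absurd ⟨a, haX, haFp, h⟩ hqb'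
        have hfp2 : 2 ≤ (Ws∩Fp).ncard := le_trans hXFp (Set.ncard_le_ncard hsub2)
        omega
  obtain ⟨k1, k2, k3, k4⟩ := key
  have hN : ∀ w ∈ Ws, w ∉ X → (∃ a, a ∈ A ∧ G.Adj w a) ∧ (∃ b, b ∈ B ∧ G.Adj w b) := by
    intro w hw hwX
    constructor
    · by_contra hno
      push_neg at hno
      have hcl : ∀ a ∈ A, ∀ b, G.Adj a b → b ∉ Ws \ {w} → b ∈ A := by
        intro a ha b hadj hb
        by_cases hbW : b ∈ Ws
        · have hbw : b = w := by
            by_contra hne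
            exact hb ⟨hbW, hne⟩
          exact absurd (hbw ▸ hadj.symm) (fun h => hno a ha h)
        · exact hAcl a ha b hadj hbW
      have hpS : x₁ ∉ Ws \ {w} := fun h => hAW _ hAx h.1
      have hqS : x₂ ∉ Ws \ {w} := fun h => hBW _ hx₂B h.1
      have h4 := hXsep _ (sepSet_of_closed hcl hx₁.1 hAx hpS hx₂.1 hx₂B.2 hqS)
      rw [Set.ncard_diff_singleton_of_mem hw] at h4
      omega
    · by_contra hno
      push_neg at hno
      have hcl : ∀ a ∈ B, ∀ b, G.Adj a b → b ∉ Ws \ {w} → b ∈ B := by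
        intro a ha b hadj hb
        by_cases hbW : b ∈ Ws
        · have hbw : b = w := by
            by_contra hne
            exact hb ⟨hbW, hne⟩
          exact absurd (hbw ▸ hadj.symm) (fun h => hno a ha h)
        · exact hBcl a ha b hadj hbW
      have hpS : x₂ ∉ Ws \ {w} := fun h => hBW _ hx₂B h.1
      have hqS : x₁ ∉ Ws \ {w} := fun h => hAW _ hAx h.1
      have hqQ : x₁ ∉ B := fun h => hAB x₁ hAx h
      have h4 := hXsep _ (sepSet_of_closed hcl hx₂.1 hx₂B hpS hx₁.1 hqQ hqS)
      rw [Set.ncard_diff_singleton_of_mem hw] at h4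
      omega
  have hWT : Ws ∩ T = {t} := by
    obtain ⟨t₀, ht₀⟩ := Set.ncard_eq_one.mp k1
    have hmem : t ∈ Ws ∩ T := ⟨htW, ht⟩
    rw [ht₀] at hmem
    have e := Set.mem_singleton_iff.mp hmem
    rw [ht₀, e]
  have hWF : Ws ∩ F = {c} := by
    obtain ⟨c₀, hc₀⟩ := Set.ncard_eq_one.mp k2
    have hmem : c ∈ Ws ∩ F := ⟨hcW, hc⟩
    rw [hc₀] at hmem
    have e := Set.mem_singleton_iff.mp hmem
    rw [hc₀, e]
  obtain ⟨σA, hTA⟩ := Set.ncard_eq_one.mp k3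
  obtain ⟨σB, hTB⟩ := Set.ncard_eq_one.mp k4
  exact ⟨Ws, A, B, σA, σB, cover, hAW, hBW, hAB, hAcl, hBcl, hWT, hWF, hTA, hTB,
    ⟨x₁, hx₁.1, hAx⟩, ⟨x₂, hx₂.1, hx₂B⟩, hN⟩



lemma subfrag {V : Type*} [Fintype V] {G : SimpleGraph V} {X T F Ws Z : Set V}
    {t c σZ x_out : V} {n : ℕ}
    (hVsep : ∀ S : Set V, SepSet G Set.univ S → 3 ≤ S.ncard)
    (hIH : ∀ T' F' : Set V, T'.ncard = 3 → IsFragment G T' F' → Disjoint F' X →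
      F'.ncard ≤ n → F'.ncard = 1)
    (hF : IsFragment G T F) (hfree : Disjoint F X)
    (hWT : Ws ∩ T = {t}) (hWF : Ws ∩ F = {c})
    (hZT : Z ∩ T = {σZ}) (hZW : ∀ a, a ∈ Z → a ∉ Ws)
    (hZcl : ∀ a ∈ Z, ∀ b, G.Adj a b → b ∉ Ws → b ∈ Z)
    (hxX : x_out ∈ X) (hxZ : x_out ∉ Z) (hxW : x_out ∉ Ws)
    (hne : (F ∩ Z).Nonempty) (hsz : (F ∩ Z).ncard ≤ n) :
    ∃ ζ, F ∩ Z = {ζ} ∧ G.neighborSet ζ = {σZ, t, c} := by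
  have htWT : t ∈ Ws ∩ T := by rw [hWT]; rfl
  have hcWF : c ∈ Ws ∩ F := by rw [hWF]; rfl
  have hσ : σZ ∈ Z ∩ T := by rw [hZT]; rfl
  have hFT : ∀ a, a ∈ F → a ∉ T := fun a ha => Set.disjoint_left.mp hF.2.1 ha
  have hσt : σZ ≠ t := fun e => hZW σZ hσ.1 (by rw [e]; exact htWT.1)
  have hσc : σZ ≠ c := fun e => hZW σZ hσ.1 (by rw [e]; exact hcWF.1)
  have htc : t ≠ c := fun e => hFT c hcWF.2 (by rw [← e]; exact htWT.2)
  have hSg3 : ({σZ, t, c} : Set V).ncard = 3 :=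
    Set.ncard_eq_three.mpr ⟨σZ, t, c, hσt, hσc, htc, rfl⟩
  have hFcl := hF.2.2.2
  have hxSg : x_out ∉ ({σZ, t, c} : Set V) := by
    rintro (rfl | rfl | rfl)
    · exact hxZ hσ.1
    · exact hxW htWT.1
    · exact hxW hcWF.1
  have hcl : ∀ a ∈ F ∩ Z, ∀ b, G.Adj a b → b ∉ ({σZ, t, c} : Set V) → b ∈ F ∩ Z := by
    intro a ha b hadj hbSg
    have hbW : b ∉ Ws := by
      intro hbW
      by_cases hbT : b ∈ T
      · have hm : b ∈ Ws ∩ T := ⟨hbW, hbT⟩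
        rw [hWT] at hm
        exact hbSg (Or.inr (Or.inl hm))
      · have hbF : b ∈ F := hFcl a ha.1 b hadj hbT
        have hm : b ∈ Ws ∩ F := ⟨hbW, hbF⟩
        rw [hWF] at hm
        exact hbSg (Or.inr (Or.inr hm))
    have hbZ : b ∈ Z := hZcl a ha.2 b hadj hbW
    have hbT : b ∉ T := by
      intro hbT
      have hm : b ∈ Z ∩ T := ⟨hbZ, hbT⟩
      rw [hZT] at hm
      exact hbSg (Or.inl hm)
    exact ⟨hFcl a ha.1 b hadj hbT, hbZ⟩
  have hfrag : IsFragment G ({σZ, t, c} : Set V) (F ∩ Z) := by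
    refine ⟨hne, ?_, ⟨x_out, hxSg, fun h => hxZ h.2⟩, hcl⟩
    rw [Set.disjoint_left]
    rintro a ⟨haF, haZ⟩ (rfl | rfl | rfl)
    · exact hFT a haF hσ.2
    · exact hFT a haF htWT.2
    · exact hZW a haZ hcWF.1
  have h1 := hIH _ _ hSg3 hfrag (hfree.mono_left Set.inter_subset_left) hsz
  obtain ⟨ζ, hζ⟩ := Set.ncard_eq_one.mp h1
  have hζm : ζ ∈ F ∩ Z := by rw [hζ]; rfl
  have hNsub : G.neighborSet ζ ⊆ {σZ, t, c} := by
    intro b hb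
    by_contra hbSg
    have hm : b ∈ F ∩ Z := hcl ζ hζm b hb hbSg
    rw [hζ] at hm
    have e : b = ζ := hm
    exact G.loopless.irrefl ζ (e ▸ hb)
  have hsep : SepSet G Set.univ (G.neighborSet ζ) := by
    refine sepSet_of_closed (Q := {ζ}) ?_ (Set.mem_univ ζ) rfl
      (fun h => G.loopless.irrefl ζ h) (Set.mem_univ x_out)
      (fun e => hxZ ((Set.mem_singleton_iff.mp e) ▸ hζm.2))
      (fun h => hxSg (hNsub h))
    intro a ha b hadj hbS
    exact absurd (show b ∈ G.neighborSet ζ from (Set.mem_singleton_iff.mp ha) ▸ hadj) hbS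
  have h3 := hVsep _ hsep
  have heq : G.neighborSet ζ = {σZ, t, c} :=
    Set.eq_of_subset_of_ncard_le hNsub (by rw [hSg3]; exact h3) (Set.toFinite _)
  exact ⟨ζ, hζ, heq⟩

lemma endgame {V : Type*} [Fintype V] {G : SimpleGraph V} {X T F : Set V}
    (hXsep : ∀ S : Set V, SepSet G X S → 4 ≤ S.ncard)
    (hX5 : 5 ≤ X.ncard)
    (hcontr : ∀ v y : V, G.Adj v y → y ∉ X → graphKappa (contractEdge G v y) X < 4)
    (hT3 : T.ncard = 3) (hF : IsFragment G T F) (hfree : Disjoint F X)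
    {t c σ ζ : V}
    (ht : t ∈ T) (hc : c ∈ F) (htc : G.Adj t c)
    (hσT : σ ∈ T) (hσt : σ ≠ t) (hζF : ζ ∈ F) (hζc : ζ ≠ c)
    (hNζ : G.neighborSet ζ = {σ, t, c}) : False := by
  have hσζ : G.Adj σ ζ := by
    have hm : σ ∈ G.neighborSet ζ := by rw [hNζ]; exact Or.inl rfl
    exact hm.symm
  obtain ⟨W₂, A₂, B₂, τa, τb, cover₂, hAW₂, hBW₂, hAB₂, hAcl₂, hBcl₂, hWT₂, hWF₂,
    hTA₂, hTB₂, hXA₂, hXB₂, hN₂⟩ :=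
    uniform hXsep hX5 hcontr hT3 hF hfree hσT hζF hσζ
  have hζW₂ : ζ ∈ W₂ := by
    have hm : ζ ∈ W₂ ∩ F := by rw [hWF₂]; rfl
    exact hm.1
  have hσW₂ : σ ∈ W₂ := by
    have hm : σ ∈ W₂ ∩ T := by rw [hWT₂]; rfl
    exact hm.1
  have htW₂ : t ∉ W₂ := by
    intro h
    have hm : t ∈ W₂ ∩ T := ⟨h, ht⟩
    rw [hWT₂] at hm
    exact hσt (Set.mem_singleton_iff.mp hm).symm
  have hcW₂ : c ∉ W₂ := by
    intro h
    have hm : c ∈ W₂ ∩ F := ⟨h, hc⟩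
    rw [hWF₂] at hm
    exact hζc (Set.mem_singleton_iff.mp hm).symm
  have hζX : ζ ∉ X := Set.disjoint_left.mp hfree hζF
  obtain ⟨⟨a₂, haA, haAdj⟩, ⟨b₂, hbB, hbAdj⟩⟩ := hN₂ ζ hζW₂ hζX
  have ha₂ : a₂ ∈ ({σ, t, c} : Set V) := by rw [← hNζ]; exact haAdj
  have hb₂ : b₂ ∈ ({σ, t, c} : Set V) := by rw [← hNζ]; exact hbAdj
  rcases cover₂ t with h | hA | hB
  · exact htW₂ h
  · have hcA : c ∈ A₂ := by
      rcases cover₂ c with h | h | h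
      · exact absurd h hcW₂
      · exact h
      · exact absurd (hBcl₂ c h t htc.symm htW₂) (fun h' => hAB₂ t hA h')
    rcases hb₂ with rfl | rfl | rfl
    · exact hBW₂ _ hbB hσW₂
    · exact hAB₂ _ hA hbB
    · exact hAB₂ _ hcA hbB
  · have hcB : c ∈ B₂ := by
      rcases cover₂ c with h | h | h
      · exact absurd h hcW₂
      · exact absurd hB (fun h' => hAB₂ t (hAcl₂ c h t htc.symm htW₂) h')
      · exact h
    rcases ha₂ with rfl | rfl | rfl
    · exact hAW₂ _ haA hσW₂
    · exact hAB₂ _ haA hB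
    · exact hAB₂ _ haA hcB

lemma aux {V : Type*} [Fintype V] {G : SimpleGraph V} {X : Set V}
    (hconn : G.Connected)
    (hXsep : ∀ S : Set V, SepSet G X S → 4 ≤ S.ncard)
    (hX5 : 5 ≤ X.ncard)
    (hVsep : ∀ S : Set V, SepSet G Set.univ S → 3 ≤ S.ncard)
    (hcontr : ∀ v y : V, G.Adj v y → y ∉ X → graphKappa (contractEdge G v y) X < 4) :
    ∀ n : ℕ, ∀ T F : Set V, T.ncard = 3 → IsFragment G T F → Disjoint F X →
      F.ncard ≤ n → F.ncard = 1 := by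
  intro n
  induction n with
  | zero =>
    intro T F _ hF _ hle
    have := (Set.ncard_pos (Set.toFinite _)).mpr hF.1
    omega
  | succ n ih =>
    intro T F hT3 hF hfree hle
    obtain ⟨t, ht, c, hc, htc⟩ := frag_edge hconn hF
    obtain ⟨Ws, A, B, σA, σB, cover, hAW, hBW, hAB, hAcl, hBcl, hWT, hWF, hTA, hTB,
      hXA, hXB, hN⟩ := uniform hXsep hX5 hcontr hT3 hF hfree ht hc htc
    have hcW : c ∈ Ws := by
      have hm : c ∈ Ws ∩ F := by rw [hWF]; rfl
      exact hm.1
    have htWs : t ∈ Ws := by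
      have hm : t ∈ Ws ∩ T := by rw [hWT]; rfl
      exact hm.1
    have hsz : ∀ Z : Set V, (∀ a, a ∈ Z → a ∉ Ws) → (F ∩ Z).ncard ≤ n := by
      intro Z hZW
      have hcZ : c ∉ F ∩ Z := fun h => hZW c h.2 hcW
      have hins : insert c (F ∩ Z) ⊆ F := by
        rintro a (rfl | h)
        · exact hc
        · exact h.1
      have h1 : (insert c (F ∩ Z)).ncard ≤ F.ncard := Set.ncard_le_ncard hins
      rw [Set.ncard_insert_of_notMem hcZ] at h1
      omega
    by_cases hAne : (F ∩ A).Nonempty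
    · exfalso
      obtain ⟨xb, hxbX, hxbB⟩ := hXB
      obtain ⟨ζ, hζeq, hζN⟩ := subfrag hVsep ih hF hfree hWT hWF hTA hAW hAcl
        hxbX (fun h => hAB xb h hxbB) (hBW xb hxbB) hAne (hsz A hAW)
      have hζm : ζ ∈ F ∩ A := by rw [hζeq]; rfl
      have hσAm : σA ∈ A ∩ T := by rw [hTA]; rfl
      exact endgame hXsep hX5 hcontr hT3 hF hfree ht hc htc hσAm.2
        (fun e => hAW σA hσAm.1 (by rw [e]; exact htWs)) hζm.1
        (fun e => hAW ζ hζm.2 (by rw [e]; exact hcW)) hζN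
    · by_cases hBne : (F ∩ B).Nonempty
      · exfalso
        obtain ⟨xa, hxaX, hxaA⟩ := hXA
        obtain ⟨ζ, hζeq, hζN⟩ := subfrag hVsep ih hF hfree hWT hWF hTB hBW hBcl
          hxaX (hAB xa hxaA) (hAW xa hxaA) hBne (hsz B hBW)
        have hζm : ζ ∈ F ∩ B := by rw [hζeq]; rfl
        have hσBm : σB ∈ B ∩ T := by rw [hTB]; rfl
        exact endgame hXsep hX5 hcontr hT3 hF hfree ht hc htc hσBm.2
          (fun e => hBW σB hσBm.1 (by rw [e]; exact htWs)) hζm.1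
          (fun e => hBW ζ hζm.2 (by rw [e]; exact hcW)) hζN
      · have hFc : F = {c} := by
          apply Set.Subset.antisymm
          · intro a haF
            rcases cover a with h | h | h
            · have hm : a ∈ Ws ∩ F := ⟨h, haF⟩
              rw [hWF] at hm
              exact hm
            · exact absurd ⟨a, haF, h⟩ hAne
            · exact absurd ⟨a, haF, h⟩ hBne
          · intro a ha
            rw [Set.mem_singleton_iff.mp ha]
            exact hc
        rw [hFc, Set.ncard_singleton]

end XFS

/-- Claim: let `G` be a finite simple connected graph and `X ⊆ V(G)` with
`κ_G(X) = 4` and `κ_G(V(G)) = 3`, such that `κ_{G/vy}(X) < 4` for every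
`X`-legal edge `vy` of `G`.  If `T` is a separator of `G` with `|T| = 3` and
`F` is an `X`-free `T`-fragment of `G`, then `|F| = 1`. -/
theorem xfree_fragment_singleton {V : Type*} [Fintype V] (G : SimpleGraph V)
    (hconn : G.Connected) (X : Set V)
    (hX : graphKappa G X = 4) (hV : graphKappa G Set.univ = 3)
    (hcontr : ∀ v y : V, G.Adj v y → y ∉ X →
      graphKappa (contractEdge G v y) X < 4)
    (T : Set V) (hT : SepSet G Set.univ T) (hT3 : T.ncard = 3)
    (F : Set V) (hF : IsFragment G T F) (hfree : Disjoint F X) :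
    F.ncard = 1 := by
  obtain ⟨hXb, hXsep⟩ := XFS.kappa_le_spec hX
  have hX5 : 5 ≤ X.ncard := by omega
  obtain ⟨_, hVsep⟩ := XFS.kappa_le_spec hV
  exact XFS.aux hconn hXsep hX5 hVsep hcontr F.ncard T F hT3 hF hfree le_rfl
end

section
/- Let G be a finite simple 2-connected graph, X ⊆ V(G) with κ_G(X) ≥ 4, and let Q be a Tutte path of G. If X is not a subset of V(Q), then X ⊆ V(B) for some bridge B of Q, and in this case Q contains at most 3 vertices of X. -/
open SimpleGraph

variable {V : Type*} {W : Type*}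

/-- `K` is (the vertex set of) a component of `G - S`: nonempty, disjoint from
`S`, connected, and closed under adjacency outside `S`. -/
def IsCompOutside (G : SimpleGraph V) (S K : Set V) : Prop :=
  K.Nonempty ∧ Disjoint K S ∧ (G.induce K).Connected ∧
    ∀ a ∈ K, ∀ b, G.Adj a b → b ∉ S → b ∈ K

/-- The set of attachments of the (non-trivial) bridge determined by the
component `K` of `G - S`: the neighbours of `K` inside `S`. -/
def attachments (G : SimpleGraph V) (S K : Set V) : Set V :=
  {w | w ∈ S ∧ ∃ a ∈ K, G.Adj a w}

/-- `Q` is a Tutte path of `G`: a path on at least two vertices such that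
every (non-trivial) bridge of `Q` has at most three attachments. -/
def IsTuttePath (G : SimpleGraph V) {u v : V} (Q : G.Walk u v) : Prop :=
  Q.IsPath ∧ u ≠ v ∧
    ∀ K : Set V, IsCompOutside G {z | z ∈ Q.support} K →
      (attachments G {z | z ∈ Q.support} K).ncard ≤ 3

/-- Walk induction helper: a predicate closed along edges of an induced
subgraph propagates along walks. -/
private lemma walk_ind {V : Type*} {G : SimpleGraph V} {s : Set V} (P : V → Prop)
    (hcl : ∀ a b : V, a ∈ s → b ∈ s → G.Adj a b → P a → P b) :
    ∀ {a b : ↥s} (_ : (G.induce s).Walk a b), P a → P b := by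
  intro a b w
  induction w with
  | nil => exact id
  | @cons a c b h w ih =>
    exact fun hp => ih (hcl a c a.2 c.2 h hp)

/-- From `k ≤ graphKappa G X` deduce every `X`-separator has at least `k`
vertices. -/
private lemma kappa_le_sep {V : Type*} (G : SimpleGraph V) (X : Set V) {k : ℕ}
    (hk : k ≤ graphKappa G X) : ∀ S : Set V, SepSet G X S → k ≤ S.ncard := by
  have hne : ({n : ℕ | n ≤ X.ncard - 1 ∧ ∀ S : Set V, SepSet G X S → n ≤ S.ncard}).Nonempty :=
    ⟨0, Nat.zero_le _, fun S _ => Nat.zero_le _⟩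
  have hbdd : BddAbove {n : ℕ | n ≤ X.ncard - 1 ∧ ∀ S : Set V, SepSet G X S → n ≤ S.ncard} :=
    ⟨X.ncard - 1, fun n hn => hn.1⟩
  have hmem := Nat.sSup_mem hne hbdd
  intro S hS
  exact le_trans hk (hmem.2 S hS)

/-- Lemma: let `G` be a finite simple `2`-connected graph, `X ⊆ V(G)` with
`κ_G(X) ≥ 4`, and let `Q` be a Tutte path of `G`.  If `X ⊄ V(Q)`, then
`X ⊆ V(B)` for some bridge `B` of `Q` (where `V(B) = I(B) ∪ T(B)`), and in
this case `Q` contains at most `3` vertices of `X`. -/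
theorem bridge_lemma {V : Type*} [Fintype V] (G : SimpleGraph V)
    (h2 : 2 ≤ graphKappa G Set.univ) (X : Set V) (hX : 4 ≤ graphKappa G X)
    {u v : V} (Q : G.Walk u v) (hQ : IsTuttePath G Q)
    (hns : ¬ ∀ x ∈ X, x ∈ Q.support) :
    (∃ K : Set V, IsCompOutside G {z | z ∈ Q.support} K ∧
        X ⊆ K ∪ attachments G {z | z ∈ Q.support} K) ∧
    {x | x ∈ X ∧ x ∈ Q.support}.ncard ≤ 3 := by
  push_neg at hns
  obtain ⟨x, hxX, hxS⟩ := hns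
  set S : Set V := {z | z ∈ Q.support} with hSdef
  have hxS' : x ∈ Sᶜ := hxS
  set K : Set V :=
    {z | ∃ h : z ∈ Sᶜ, (G.induce Sᶜ).Reachable ⟨x, hxS'⟩ ⟨z, h⟩} with hKdef
  have hxK : x ∈ K := ⟨hxS', Reachable.refl _⟩
  have hKS : Disjoint K S := Set.disjoint_left.mpr (fun z hz => hz.1)
  have hclose : ∀ a ∈ K, ∀ b, G.Adj a b → b ∉ S → b ∈ K := by
    intro a ha b hab hb
    exact ⟨hb, ha.2.trans (Adj.reachable (by exact hab))⟩
  -- connectivity of K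
  have key : ∀ z, z ∈ K → ∃ h : z ∈ K, (G.induce K).Reachable ⟨x, hxK⟩ ⟨z, h⟩ := by
    intro z hz
    obtain ⟨hz', hr⟩ := hz
    obtain ⟨w⟩ := hr
    refine walk_ind (G := G) (s := Sᶜ)
      (fun v => ∃ h : v ∈ K, (G.induce K).Reachable ⟨x, hxK⟩ ⟨v, h⟩) ?_ w
      ⟨hxK, Reachable.refl _⟩
    rintro a b haS hbS hab ⟨haK, har⟩
    have hbK : b ∈ K := hclose a haK b hab hbS
    exact ⟨hbK, har.trans (Adj.reachable (by exact hab : (G.induce K).Adj ⟨a, haK⟩ ⟨b, hbK⟩))⟩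
  have hconn : (G.induce K).Connected := by
    have : Nonempty ↥K := ⟨⟨x, hxK⟩⟩
    refine ⟨fun a b => ?_⟩
    obtain ⟨ha', hra⟩ := key a.1 a.2
    obtain ⟨hb', hrb⟩ := key b.1 b.2
    have ha'' : (⟨a.1, ha'⟩ : ↥K) = a := Subtype.ext rfl
    have hb'' : (⟨b.1, hb'⟩ : ↥K) = b := Subtype.ext rfl
    rw [ha''] at hra; rw [hb''] at hrb
    exact hra.symm.trans hrb
  have hcomp : IsCompOutside G S K := ⟨⟨x, hxK⟩, hKS, hconn, hclose⟩
  set T : Set V := attachments G S K with hTdef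
  have hT3 : T.ncard ≤ 3 := hQ.2.2 K hcomp
  have hTS : T ⊆ S := fun w hw => hw.1
  have hstep : ∀ a ∈ K, ∀ b, G.Adj a b → b ∉ T → b ∈ K := by
    intro a ha b hab hbT
    by_cases hbS : b ∈ S
    · exact absurd ⟨hbS, a, ha, hab⟩ hbT
    · exact hclose a ha b hab hbS
  have hxT : x ∉ T := fun h => hxS (hTS h)
  -- X ⊆ K ∪ T
  have hsub : X ⊆ K ∪ T := by
    intro y hy
    by_contra hyn
    rw [Set.mem_union] at hyn
    push_neg at hyn
    obtain ⟨hyK, hyT⟩ := hyn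
    have hsep : SepSet G X T := by
      refine ⟨x, y, ⟨hxX, hxT⟩, ⟨hy, hyT⟩, ?_⟩
      intro hr
      obtain ⟨w⟩ := hr
      have : y ∈ K := by
        refine walk_ind (G := G) (s := Tᶜ) (fun v => v ∈ K) ?_ w hxK
        intro a b haT hbT hab haK
        exact hstep a haK b hab hbT
      exact hyK this
    have h4 : 4 ≤ T.ncard := kappa_le_sep G X hX T hsep
    omega
  refine ⟨⟨K, hcomp, hsub⟩, ?_⟩
  have hsub2 : {x | x ∈ X ∧ x ∈ Q.support} ⊆ T := by
    rintro z ⟨hzX, hzS⟩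
    rcases hsub hzX with hzK | hzT
    · exact absurd hzS (Set.disjoint_left.mp hKS hzK)
    · exact hzT
  exact le_trans (Set.ncard_le_ncard hsub2 T.toFinite) hT3
end
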